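/- Let u = s₁…s_N be a word over {a,a⁻¹,d,d⁻¹} with a palindrome-pattern ι, and let i₀ < j₀ be adjacent indices (j₀ = i₀ + 1) with s_{j₀} ∈ {s_{i₀}, s_{i₀}⁻¹} and {i₀,j₀} not an ι-pair, i.e. ι(i₀) ≠ j₀. Define ι_new to agree with ι except that ι_new(i₀) = j₀, ι_new(j₀) = i₀, ι_new(ι(i₀)) = ι(j₀), and ι_new(ι(j₀)) = ι(i₀). Then ι_new is again a palindrome-pattern on u. -/
import Mathlib


/-- The four-letter alphabet `{a, a⁻¹, d, d⁻¹}`. -/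
inductive ADLetter : Type
  | a : ADLetter
  | ainv : ADLetter
  | d : ADLetter
  | dinv : ADLetter
deriving DecidableEq

/-- The formal inverse on the alphabet. -/
def ADLetter.inv : ADLetter → ADLetter
  | .a => .ainv
  | .ainv => .a
  | .d => .dinv
  | .dinv => .d

/-- `ι` is a palindrome-pattern on the word `w`. -/
def IsPalPattern (w : List ADLetter) (ι : Equiv.Perm (Fin w.length)) : Prop :=
  (∀ i, ι i ≠ i) ∧ (∀ i, ι (ι i) = i) ∧
  (∀ i, w.get (ι i) = w.get i ∨ w.get (ι i) = (w.get i).inv) ∧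
  (∀ i j, min i (ι i) < j → j < max i (ι i) → min i (ι i) < ι j ∧ ι j < max i (ι i))

private lemma ADLetter.rel_symm : ∀ x y : ADLetter,
    (x = y ∨ x = y.inv) → (y = x ∨ y = x.inv) := by
  intro x y; cases x <;> cases y <;> decide

private lemma ADLetter.rel_trans : ∀ x y z : ADLetter,
    (x = y ∨ x = y.inv) → (y = z ∨ y = z.inv) → (x = z ∨ x = z.inv) := by
  intro x y z; cases x <;> cases y <;> cases z <;> decide

/-- repairing a palindrome-pattern along an adjacent matching pair `i₀, j₀ = i₀+1`
which is not already an `ι`-pair yields again a palindrome-pattern. -/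
theorem palindromePattern_repair (w : List ADLetter)
    (ι : Equiv.Perm (Fin w.length)) (hι : IsPalPattern w ι)
    (i0 j0 : Fin w.length) (hadj : (j0 : ℕ) = (i0 : ℕ) + 1)
    (hletter : w.get j0 = w.get i0 ∨ w.get j0 = (w.get i0).inv)
    (hpair : ι i0 ≠ j0)
    (ιnew : Equiv.Perm (Fin w.length))
    (h1 : ιnew i0 = j0) (h2 : ιnew j0 = i0)
    (h3 : ιnew (ι i0) = ι j0) (h4 : ιnew (ι j0) = ι i0)
    (h5 : ∀ k, k ≠ i0 → k ≠ j0 → k ≠ ι i0 → k ≠ ι j0 → ιnew k = ι k) :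
    IsPalPattern w ιnew := by
  obtain ⟨hfix, hinv, hlet, hnest⟩ := hι
  have hvne : ∀ a b : Fin w.length, a ≠ b → (a : ℕ) ≠ (b : ℕ) :=
    fun a b h hv => h (Fin.ext hv)
  have hvinj : ∀ a b : Fin w.length, (a : ℕ) = (b : ℕ) → a = b := fun a b h => Fin.ext h
  have valmin : ∀ a b : Fin w.length, ((min a b : Fin w.length) : ℕ) = min (a : ℕ) (b : ℕ) :=
    fun _ _ => rfl
  have valmax : ∀ a b : Fin w.length, ((max a b : Fin w.length) : ℕ) = max (a : ℕ) (b : ℕ) :=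
    fun _ _ => rfl
  have hij : i0 ≠ j0 := by intro h; rw [h] at hadj; omega
  have hqi0 : ι j0 ≠ i0 := fun h => hpair (by rw [← h, hinv])
  have hpq : ι i0 ≠ ι j0 := fun h => hij (by rw [← hinv i0, h, hinv])
  have hnestN : ∀ i j : Fin w.length,
      min (i : ℕ) (ι i : ℕ) < (j : ℕ) → (j : ℕ) < max (i : ℕ) (ι i : ℕ) →
      min (i : ℕ) (ι i : ℕ) < (ι j : ℕ) ∧ (ι j : ℕ) < max (i : ℕ) (ι i : ℕ) := by
    intro i j hm hM
    have := hnest i j (Fin.lt_def.mpr hm) (Fin.lt_def.mpr hM)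
    exact ⟨Fin.lt_def.mp this.1, Fin.lt_def.mp this.2⟩
  -- value-level distinctness
  have vp_i0 : (ι i0 : ℕ) ≠ (i0 : ℕ) := hvne _ _ (hfix i0)
  have vp_j0 : (ι i0 : ℕ) ≠ (j0 : ℕ) := hvne _ _ hpair
  have vq_j0 : (ι j0 : ℕ) ≠ (j0 : ℕ) := hvne _ _ (hfix j0)
  have vq_i0 : (ι j0 : ℕ) ≠ (i0 : ℕ) := hvne _ _ hqi0
  have vpq : (ι i0 : ℕ) ≠ (ι j0 : ℕ) := hvne _ _ hpq
  -- the three possible configurations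
  have hconfig :
      ((j0 : ℕ) < (ι j0 : ℕ) ∧ (ι j0 : ℕ) < (ι i0 : ℕ)) ∨
      ((ι j0 : ℕ) < (ι i0 : ℕ) ∧ (ι i0 : ℕ) < (i0 : ℕ)) ∨
      ((ι i0 : ℕ) < (i0 : ℕ) ∧ (j0 : ℕ) < (ι j0 : ℕ)) := by
    by_cases hA : (i0 : ℕ) < (ι i0 : ℕ)
    · have hin := hnestN i0 j0 (by omega) (by omega)
      left; omega
    · by_cases hB : (ι j0 : ℕ) < (ι i0 : ℕ)
      · right; left; omega
      · by_cases hC : (ι j0 : ℕ) < (i0 : ℕ)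
        · exfalso
          have hin := hnestN i0 (ι j0) (by omega) (by omega)
          rw [hinv] at hin; omega
        · right; right; omega
  -- nesting for the new pair {ι i0, ι j0}
  have key : ∀ j : Fin w.length,
      min (ι i0 : ℕ) (ι j0 : ℕ) < (j : ℕ) → (j : ℕ) < max (ι i0 : ℕ) (ι j0 : ℕ) →
      min (ι i0 : ℕ) (ι j0 : ℕ) < (ιnew j : ℕ) ∧ (ιnew j : ℕ) < max (ι i0 : ℕ) (ι j0 : ℕ) := by
    intro j hj1 hj2
    by_cases e1 : j = i0
    · subst e1
      rcases hconfig with ⟨c1, c2⟩ | ⟨c1, c2⟩ | ⟨c1, c2⟩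
      · omega
      · omega
      · rw [h1]; omega
    · by_cases e2 : j = j0
      · subst e2
        rcases hconfig with ⟨c1, c2⟩ | ⟨c1, c2⟩ | ⟨c1, c2⟩
        · omega
        · omega
        · rw [h2]; omega
      · by_cases e3 : j = ι i0
        · subst e3; omega
        · by_cases e4 : j = ι j0
          · subst e4; omega
          · rw [h5 j e1 e2 e3 e4]
            have n1 : (ι j : ℕ) ≠ (i0 : ℕ) := fun h => e3 (by rw [← hvinj _ _ h, hinv])
            have n2 : (ι j : ℕ) ≠ (j0 : ℕ) := fun h => e4 (by rw [← hvinj _ _ h, hinv])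
            have n3 : (ι j : ℕ) ≠ (ι i0 : ℕ) := fun h => e1 (ι.injective (hvinj _ _ h))
            have n4 : (ι j : ℕ) ≠ (ι j0 : ℕ) := fun h => e2 (ι.injective (hvinj _ _ h))
            rcases hconfig with ⟨c1, c2⟩ | ⟨c1, c2⟩ | ⟨c1, c2⟩
            · -- i0 < j0 < ι j0 < ι i0
              have m1 := hnestN i0 j (by omega) (by omega)
              have m2 : ¬ (min (j0 : ℕ) (ι j0 : ℕ) < (ι j : ℕ) ∧
                  (ι j : ℕ) < max (j0 : ℕ) (ι j0 : ℕ)) := by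
                intro hc
                have := hnestN j0 (ι j) hc.1 hc.2
                rw [hinv] at this; omega
              omega
            · -- ι j0 < ι i0 < i0 < j0
              have m1 := hnestN j0 j (by omega) (by omega)
              have m2 : ¬ (min (i0 : ℕ) (ι i0 : ℕ) < (ι j : ℕ) ∧
                  (ι j : ℕ) < max (i0 : ℕ) (ι i0 : ℕ)) := by
                intro hc
                have := hnestN i0 (ι j) hc.1 hc.2
                rw [hinv] at this; omega
              omega
            · -- ι i0 < i0 < j0 < ι j0
              have vji : (j : ℕ) ≠ (i0 : ℕ) := hvne _ _ e1
              have vjj : (j : ℕ) ≠ (j0 : ℕ) := hvne _ _ e2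
              by_cases hlt : (j : ℕ) < (i0 : ℕ)
              · have m1 := hnestN i0 j (by omega) (by omega)
                omega
              · have m1 := hnestN j0 j (by omega) (by omega)
                omega
  refine ⟨?_, ?_, ?_, ?_⟩
  · -- fixpoint-free
    intro k
    by_cases hk1 : k = i0
    · rw [hk1, h1]; exact hij.symm
    · by_cases hk2 : k = j0
      · rw [hk2, h2]; exact hij
      · by_cases hk3 : k = ι i0
        · rw [hk3, h3]; exact hpq.symm
        · by_cases hk4 : k = ι j0
          · rw [hk4, h4]; exact hpq
          · rw [h5 k hk1 hk2 hk3 hk4]; exact hfix k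
  · -- involution
    intro k
    by_cases hk1 : k = i0
    · rw [hk1, h1, h2]
    · by_cases hk2 : k = j0
      · rw [hk2, h2, h1]
      · by_cases hk3 : k = ι i0
        · rw [hk3, h3, h4]
        · by_cases hk4 : k = ι j0
          · rw [hk4, h4, h3]
          · have e1 : ι k ≠ i0 := fun h => hk3 (by rw [← h, hinv])
            have e2 : ι k ≠ j0 := fun h => hk4 (by rw [← h, hinv])
            have e3 : ι k ≠ ι i0 := fun h => hk1 (ι.injective h)
            have e4 : ι k ≠ ι j0 := fun h => hk2 (ι.injective h)
            rw [h5 k hk1 hk2 hk3 hk4, h5 (ι k) e1 e2 e3 e4, hinv]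
  · -- letters
    intro k
    by_cases hk1 : k = i0
    · rw [hk1, h1]; exact hletter
    · by_cases hk2 : k = j0
      · rw [hk2, h2]; exact ADLetter.rel_symm _ _ hletter
      · by_cases hk3 : k = ι i0
        · rw [hk3, h3]
          exact ADLetter.rel_trans _ _ _ (hlet j0)
            (ADLetter.rel_trans _ _ _ hletter (ADLetter.rel_symm _ _ (hlet i0)))
        · by_cases hk4 : k = ι j0
          · rw [hk4, h4]
            exact ADLetter.rel_trans _ _ _ (hlet i0)
              (ADLetter.rel_trans _ _ _ (ADLetter.rel_symm _ _ hletter)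
                (ADLetter.rel_symm _ _ (hlet j0)))
          · rw [h5 k hk1 hk2 hk3 hk4]; exact hlet k
  · -- nesting
    intro i j hj1 hj2
    simp only [Fin.lt_def, valmin, valmax] at hj1 hj2 ⊢
    by_cases hi1 : i = i0
    · subst hi1; rw [h1] at hj1 hj2; omega
    · by_cases hi2 : i = j0
      · subst hi2; rw [h2] at hj1 hj2; omega
      · by_cases hi3 : i = ι i0
        · subst hi3; rw [h3] at hj1 hj2
          have := key j (by omega) (by omega); omega
        · by_cases hi4 : i = ι j0
          · subst hi4; rw [h4] at hj1 hj2
            have := key j (by omega) (by omega); omega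
          · have hii := h5 i hi1 hi2 hi3 hi4
            rw [hii] at hj1 hj2 ⊢
            have vi_i0 : (i : ℕ) ≠ (i0 : ℕ) := hvne _ _ hi1
            have vi_j0 : (i : ℕ) ≠ (j0 : ℕ) := hvne _ _ hi2
            have vo_i0 : (ι i : ℕ) ≠ (i0 : ℕ) :=
              hvne _ _ (fun h => hi3 (by rw [← h, hinv]))
            have vo_j0 : (ι i : ℕ) ≠ (j0 : ℕ) :=
              hvne _ _ (fun h => hi4 (by rw [← h, hinv]))
            by_cases f1 : j = i0
            · subst f1; rw [h1]; omega
            · by_cases f2 : j = j0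
              · subst f2; rw [h2]; omega
              · by_cases f3 : j = ι i0
                · subst f3; rw [h3]
                  have s1 := hnestN i (ι i0) hj1 hj2
                  rw [hinv] at s1
                  have s2 : min (i : ℕ) (ι i : ℕ) < (j0 : ℕ) ∧
                      (j0 : ℕ) < max (i : ℕ) (ι i : ℕ) := by omega
                  have s3 := hnestN i j0 s2.1 s2.2
                  omega
                · by_cases f4 : j = ι j0
                  · subst f4; rw [h4]
                    have s1 := hnestN i (ι j0) hj1 hj2
                    rw [hinv] at s1
                    have s2 : min (i : ℕ) (ι i : ℕ) < (i0 : ℕ) ∧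
                        (i0 : ℕ) < max (i : ℕ) (ι i : ℕ) := by omega
                    have s3 := hnestN i i0 s2.1 s2.2
                    omega
                  · rw [h5 j f1 f2 f3 f4]
                    exact hnestN i j hj1 hj2
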